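/- With the rank-one immersion Ψ(s,t) = (γ(s), a(s,t)γ' + b(s,t) jγ') in TS² as above, if a(s,t) = a₁(s) + a₂(t) for smooth functions a₁, a₂, then the mean curvature vector H⃗ = ((k b_t − a_{st})/b_t)(0, −b_tγ' + a_t jγ') vanishes identically iff the geodesic curvature k of γ is identically zero, i.e. iff γ is a geodesic of S². -/

import Mathlib

open Complex ComplexConjugate

/-- The round metric `g` in the orthonormal frame `{γ', jγ'}` of `TS²` along `γ`. -/
noncomputable def gR (x y : ℂ) : ℝ := (x * conj y).re

/-- for the rank-one immersion `Ψ(s,t) = (γ(s), aγ' + b jγ')` with separable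
`a(s,t) = a₁(s) + a₂(t)` (so `a_{st} = 0`, `a_t(s,t) = a₂'(t)`) and `b_t ≠ 0` everywhere,
the mean curvature vector `H⃗(s,t) = ((k b_t − a_{st})/b_t)(0, −b_tγ' + a_t jγ')` vanishes
identically iff the geodesic curvature `k` of `γ` vanishes identically, i.e. iff `γ` is a
geodesic of `S²`. -/
theorem stmt7 (k : ℝ → ℝ) (a₂ : ℝ → ℝ) (b_t : ℝ → ℝ → ℝ)
    (hbt : ∀ s t, b_t s t ≠ 0) :
    (∀ s t : ℝ,
      (((k s * b_t s t - 0) / b_t s t : ℝ) •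
          (((0 : ℂ), -((b_t s t : ℝ) : ℂ) + ((deriv a₂ t : ℝ) : ℂ) * Complex.I) : ℂ × ℂ))
        = (0, 0)) ↔ ∀ s : ℝ, k s = 0 := by
  constructor
  · intro h s
    have h2 := congrArg Prod.snd (h s 0)
    simp only [Prod.smul_snd] at h2
    have hvec : -((b_t s 0 : ℝ) : ℂ) + ((deriv a₂ 0 : ℝ) : ℂ) * Complex.I ≠ 0 := by
      intro he
      have := congrArg Complex.re he
      simp at this
      exact hbt s 0 this
    have hc : ((k s * b_t s 0 - 0) / b_t s 0 : ℝ) = 0 := by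
      by_contra hne
      exact hvec (by
        have := smul_eq_zero.mp h2
        rcases this with h' | h'
        · exact absurd h' hne
        · exact h')
    rw [sub_zero, div_eq_zero_iff] at hc
    rcases hc with hc | hc
    · rcases mul_eq_zero.mp hc with h' | h'
      · exact h'
      · exact absurd h' (hbt s 0)
    · exact absurd hc (hbt s 0)
  · intro h s t
    simp [h s]
    rfl
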